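/- In the symmetric n-agent fire sale game with one asset, α = 1, linear price impact with p₁⁰ = n/2, x_{i1} = 1/n, l_i = a_i^I > 0, and λ = 2 a_i^I + 1: both y¹ = (1,...,1) and y⁰ = (0,...,0) are Nash equilibria for sufficiently large n, with social welfare sw(y¹) = n/2 and sw(y⁰) = 0. -/

import Mathlib

/-- Equity in the symmetric game: `e(y) = x_{i1} p₁(y) = (∑ y_k)/(2n)`. -/
noncomputable def fsEquity (n : ℕ) (y : Fin n → ℝ) : ℝ :=
  (∑ k, y k) / (2 * (n : ℝ))

/-- Assets of agent `i`: `a_i(y) = aI + y_i x_{i1} p₁(y)`. -/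
noncomputable def fsAssets (aI : ℝ) (n : ℕ) (i : Fin n) (y : Fin n → ℝ) : ℝ :=
  aI + y i * fsEquity n y

/-- Utility with `α = 1` and leverage cap `λ = 2 aI + 1`. -/
noncomputable def fsUtil (aI : ℝ) (n : ℕ) (i : Fin n) (y : Fin n → ℝ) : EReal :=
  if (0 < fsEquity n y ∧ fsAssets aI n i y / fsEquity n y ≤ 2 * aI + 1) ∨ y i = 0
  then ((fsEquity n y : ℝ) : EReal) else ⊥

private lemma coe_sum' {ι : Type*} (s : Finset ι) (f : ι → ℝ) :
    ((∑ i ∈ s, f i : ℝ) : EReal) = ∑ i ∈ s, ((f i : ℝ) : EReal) :=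
  map_sum (⟨⟨Real.toEReal, EReal.coe_zero⟩, EReal.coe_add⟩ : ℝ →+ EReal) f s

/-- In the symmetric `n`-agent one-asset game with `α = 1`,
linear price impact, `p₁⁰ = n/2`, `x_{i1} = 1/n`, `l_i = a_i^I > 0` and
`λ = 2 a_i^I + 1`, for all sufficiently large `n` both `(1,…,1)` and
`(0,…,0)` are Nash equilibria, with social welfare `n/2` and `0`
respectively. -/
theorem stmt_18 (aI : ℝ) (haI : 0 < aI) :
    ∃ n0 : ℕ, ∀ n : ℕ, n0 ≤ n →
      -- (1,…,1) is a Nash equilibrium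
      (∀ i : Fin n, ∀ t ∈ Set.Icc (0:ℝ) 1,
        fsUtil aI n i (Function.update (fun _ => 1) i t) ≤
          fsUtil aI n i (fun _ => 1)) ∧
      -- (0,…,0) is a Nash equilibrium
      (∀ i : Fin n, ∀ t ∈ Set.Icc (0:ℝ) 1,
        fsUtil aI n i (Function.update (fun _ => 0) i t) ≤
          fsUtil aI n i (fun _ => 0)) ∧
      -- social welfare of the two equilibria
      (∑ i : Fin n, fsUtil aI n i (fun _ => 1)) = (((n : ℝ) / 2 : ℝ) : EReal) ∧
      (∑ i : Fin n, fsUtil aI n i (fun _ => 0)) = (0 : EReal) := by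
  refine ⟨⌈1 + 1 / (2 * aI)⌉₊, fun n hn => ?_⟩
  have hn1 : (1 : ℝ) ≤ (n : ℝ) := by
    have h1 : (1:ℝ) ≤ 1 + 1/(2*aI) := by
      have : (0:ℝ) < 1/(2*aI) := by positivity
      linarith
    calc (1:ℝ) ≤ 1 + 1/(2*aI) := h1
      _ ≤ (⌈1 + 1/(2*aI)⌉₊ : ℝ) := Nat.le_ceil _
      _ ≤ (n : ℝ) := by exact_mod_cast hn
  have hnR : (0:ℝ) < n := by linarith
  have hnbig : 2 * aI + 1 ≤ 2 * aI * n := by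
    have h := (Nat.le_ceil (1 + 1/(2*aI))).trans
      (by exact_mod_cast hn : (⌈1 + 1/(2*aI)⌉₊ : ℝ) ≤ n)
    have h2 : (0:ℝ) < 2 * aI := by linarith
    calc 2 * aI + 1 = 2 * aI * (1 + 1/(2*aI)) := by field_simp
      _ ≤ 2 * aI * n := by nlinarith
  -- equity at all-ones
  have he1 : fsEquity n (fun _ => 1) = 1/2 := by
    simp only [fsEquity, Finset.sum_const, Finset.card_univ, Fintype.card_fin, nsmul_eq_mul,
      mul_one]
    field_simp
  have hu1 : ∀ i : Fin n, fsUtil aI n i (fun _ => 1) = ((1/2 : ℝ) : EReal) := by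
    intro i
    rw [fsUtil, if_pos, he1]
    left
    refine ⟨by rw [he1]; norm_num, ?_⟩
    rw [fsAssets, he1]
    rw [div_le_iff₀ (by norm_num : (0:ℝ) < 1/2)]
    ring_nf
    linarith
  have hu0 : ∀ i : Fin n, fsUtil aI n i (fun _ => 0) = ((0 : ℝ) : EReal) := by
    intro i
    rw [fsUtil, if_pos (Or.inr rfl), fsEquity]
    simp
  refine ⟨?_, ?_, ?_, ?_⟩
  · -- Nash at all-ones
    intro i t ht
    rw [hu1 i, fsUtil]
    split_ifs with h
    · refine EReal.coe_le_coe_iff.mpr ?_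
      rw [fsEquity, Finset.sum_update_of_mem (Finset.mem_univ i)]
      have hcn : ((Finset.univ \ {i} : Finset (Fin n))).card = n - 1 := by
        rw [Finset.sdiff_singleton_eq_erase, Finset.card_erase_of_mem (Finset.mem_univ i),
          Finset.card_univ, Fintype.card_fin]
      have hcard : (((Finset.univ \ {i} : Finset (Fin n))).card : ℝ) = (n : ℝ) - 1 := by
        rw [hcn]
        have hn' : 1 ≤ n := by exact_mod_cast hn1
        push_cast [Nat.cast_sub hn']
        ring
      rw [Finset.sum_const, nsmul_eq_mul, mul_one, hcard]
      rw [div_le_iff₀ (by positivity : (0:ℝ) < 2 * (n:ℝ))]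
      have := ht.2
      linarith
    · exact bot_le
  · -- Nash at all-zeros
    intro i t ht
    rw [hu0 i, fsUtil]
    have hes : fsEquity n (Function.update (fun _ => 0) i t) = t / (2 * n) := by
      rw [fsEquity, Finset.sum_update_of_mem (Finset.mem_univ i)]
      simp
    rcases eq_or_lt_of_le ht.1 with h0 | h0
    · rw [if_pos (Or.inr ?_), hes, ← h0]
      · simp
      · simpa [Function.update_self] using h0.symm
    · rw [if_neg]
      · exact bot_le
      rintro (⟨hepos, hlev⟩ | hzero)
      · -- leverage contradiction
        have hepos' : (0:ℝ) < t / (2 * n) := by rw [← hes]; exact hepos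
        have hlev' : fsAssets aI n i (Function.update (fun _ => 0) i t) /
            fsEquity n (Function.update (fun _ => 0) i t) ≤ 2 * aI + 1 := hlev
        rw [fsAssets, hes, Function.update_self] at hlev'
        rw [div_le_iff₀ hepos'] at hlev'
        have ht1 : t ≤ 1 := ht.2
        have h2n : (0:ℝ) < 2 * (n:ℝ) := by positivity
        have h' := mul_le_mul_of_nonneg_right hlev' h2n.le
        have key : aI * (2 * n) + t * t ≤ (2 * aI + 1) * t := by
          calc aI * (2 * n) + t * t
              = (aI + t * (t / (2 * n))) * (2 * n) := by field_simp
            _ ≤ (2 * aI + 1) * (t / (2 * n)) * (2 * n) := h'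
            _ = (2 * aI + 1) * t := by field_simp
        nlinarith [mul_pos h0 h0]
      · rw [Function.update_self] at hzero; linarith
  · -- welfare at all-ones
    have : ∀ i : Fin n, fsUtil aI n i (fun _ => 1) = ((1/2 : ℝ) : EReal) := hu1
    calc (∑ i : Fin n, fsUtil aI n i (fun _ => 1))
        = ∑ i : Fin n, ((1/2 : ℝ) : EReal) := Finset.sum_congr rfl fun i _ => hu1 i
      _ = (((∑ _i : Fin n, (1/2 : ℝ)) : ℝ) : EReal) := (coe_sum' _ _).symm
      _ = (((n : ℝ) / 2 : ℝ) : EReal) := by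
          congr 1
          simp [Finset.sum_const, nsmul_eq_mul]
          ring
  · calc (∑ i : Fin n, fsUtil aI n i (fun _ => 0))
        = ∑ i : Fin n, ((0 : ℝ) : EReal) := Finset.sum_congr rfl fun i _ => hu0 i
      _ = 0 := by simp
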